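/- Let G be a finite simple graph with no isolatable vertex. If I is a maximum independent set in G (i.e., an independent set of cardinality α(G)) and x is any vertex of I, then the subgraph of G induced by the vertices outside the closed neighborhood of I \ {x} is a clique of order at least two. -/

import Mathlib

/-- A set of vertices is independent if no two of its vertices are adjacent. -/
def IsIndep {V : Type*} (G : SimpleGraph V) (s : Set V) : Prop :=
  ∀ ⦃u⦄, u ∈ s → ∀ ⦃v⦄, v ∈ s → ¬ G.Adj u v

/-- A maximal independent set: independent and contained in no strictly larger
independent set. -/
def MaxIndep {V : Type*} (G : SimpleGraph V) (s : Set V) : Prop :=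
  IsIndep G s ∧ ∀ t : Set V, IsIndep G t → s ⊆ t → s = t

/-- A maximal independent set of the subgraph induced on `A`. -/
def MaxIndepOn {V : Type*} (G : SimpleGraph V) (A : Set V) (s : Set V) : Prop :=
  s ⊆ A ∧ IsIndep G s ∧ ∀ t : Set V, t ⊆ A → IsIndep G t → s ⊆ t → s = t

/-- A graph is well-covered if every maximal independent set has the same cardinality. -/
def WellCovered {V : Type*} (G : SimpleGraph V) : Prop :=
  ∀ s t : Set V, MaxIndep G s → MaxIndep G t → s.ncard = t.ncard

/-- The closed neighborhood `N[S]`: the union of `S` with the set of all vertices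
adjacent to some vertex of `S`. -/
def ClosedNbhd {V : Type*} (G : SimpleGraph V) (S : Set V) : Set V :=
  S ∪ {v | ∃ u ∈ S, G.Adj u v}

/-- A vertex `x` is isolatable if there is an independent set `M` such that `x` is the
unique vertex lying outside `N[M]`. -/
def Isolatable {V : Type*} (G : SimpleGraph V) (x : V) : Prop :=
  ∃ M : Set V, IsIndep G M ∧ (ClosedNbhd G M)ᶜ = {x}

/-- If `G` has no isolatable vertex, `I` is a maximum independent set and `x ∈ I`,
then the subgraph induced by the vertices outside `N[I \ {x}]` is a clique of order
at least two. -/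
theorem stmt_0 {V : Type*} [Fintype V] (G : SimpleGraph V)
    (hno : ∀ x : V, ¬ Isolatable G x)
    (I : Set V) (hI : IsIndep G I)
    (hmax : ∀ s : Set V, IsIndep G s → s.ncard ≤ I.ncard)
    (x : V) (hx : x ∈ I) :
    G.IsClique ((ClosedNbhd G (I \ {x}))ᶜ) ∧ 2 ≤ ((ClosedNbhd G (I \ {x}))ᶜ).ncard := by
  classical
  set J := I \ {x} with hJdef
  have hJindep : IsIndep G J := fun u hu v hv => hI hu.1 hv.1
  have hfin : ∀ s : Set V, s.Finite := fun s => s.toFinite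
  have hxmem : x ∈ (ClosedNbhd G J)ᶜ := by
    intro hxc
    rcases hxc with h | ⟨u, hu, hadj⟩
    · exact h.2 rfl
    · exact hI hu.1 hx hadj
  have hJcard : J.ncard + 1 = I.ncard := Set.ncard_diff_singleton_add_one hx
  constructor
  · intro a ha b hb hab
    by_contra hadj
    have haJ : a ∉ ClosedNbhd G J := ha
    have hbJ : b ∉ ClosedNbhd G J := hb
    have hindep : IsIndep G (insert a (insert b J)) := by
      intro u hu v hv huv
      rcases hu with rfl | rfl | hu
      · rcases hv with rfl | rfl | hv
        · exact G.loopless.irrefl _ huv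
        · exact hadj huv
        · exact haJ (Or.inr ⟨v, hv, huv.symm⟩)
      · rcases hv with rfl | rfl | hv
        · exact hadj huv.symm
        · exact G.loopless.irrefl _ huv
        · exact hbJ (Or.inr ⟨v, hv, huv.symm⟩)
      · rcases hv with rfl | rfl | hv
        · exact haJ (Or.inr ⟨u, hu, huv⟩)
        · exact hbJ (Or.inr ⟨u, hu, huv⟩)
        · exact hJindep hu hv huv
    have haJ' : a ∉ J := fun h => haJ (Or.inl h)
    have hbJ' : b ∉ J := fun h => hbJ (Or.inl h)
    have hcard : (insert a (insert b J)).ncard = J.ncard + 2 := by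
      rw [Set.ncard_insert_of_notMem (by simp [haJ', hab]) ((hfin J).insert b),
          Set.ncard_insert_of_notMem hbJ' (hfin J)]
    have := hmax _ hindep
    omega
  · by_contra h
    push_neg at h
    have h1 : (ClosedNbhd G J)ᶜ = {x} := by
      refine Set.eq_singleton_iff_unique_mem.2 ⟨hxmem, ?_⟩
      intro y hy
      by_contra hyx
      have hsub : ({y, x} : Set V) ⊆ (ClosedNbhd G J)ᶜ := by
        intro z hz
        rcases hz with rfl | rfl
        · exact hy
        · exact hxmem
      have h2 : 2 ≤ ((ClosedNbhd G J)ᶜ).ncard := by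
        calc 2 = ({y, x} : Set V).ncard := (Set.ncard_pair hyx).symm
          _ ≤ _ := Set.ncard_le_ncard hsub (hfin _)
      omega
    exact hno x ⟨J, hJindep, h1⟩
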